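/- Let β > 0 and let g : [0, R) → ℝ satisfy g(t) ≤ ((e^{β(r-t)} - 1)/(e^{β(r-s)} - 1))·g(s) + ((e^{β(r-s)} - e^{β(r-t)})/(e^{β(r-s)} - 1))·g(r) for all 0 ≤ s ≤ t ≤ r < R. Then the function r ↦ β·(g(r) - e^{-βr} g(0))/(1 - e^{-βr}) is nondecreasing on (0, R). -/

import Mathlib

open Real Set

theorem beta_slope_monotone (β R : ℝ) (hβ : 0 < β) (hR : 0 < R) (g : ℝ → ℝ)
    (hg : ∀ s t r : ℝ, 0 ≤ s → s ≤ t → t ≤ r → r < R →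
      g t ≤ ((Real.exp (β * (r - t)) - 1) / (Real.exp (β * (r - s)) - 1)) * g s +
            ((Real.exp (β * (r - s)) - Real.exp (β * (r - t))) /
              (Real.exp (β * (r - s)) - 1)) * g r) :
    MonotoneOn (fun r => β * (g r - Real.exp (-β * r) * g 0) / (1 - Real.exp (-β * r)))
      (Ioo (0:ℝ) R) := by
  rintro a ⟨ha0, haR⟩ b ⟨hb0, hbR⟩ hab
  dsimp only
  set A := Real.exp (β * b) with hAdef
  set B := Real.exp (β * a) with hBdef
  have hB0 : 0 < B := Real.exp_pos _
  have hA0 : 0 < A := Real.exp_pos _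
  have hB1 : 1 < B := by
    rw [hBdef, show (1:ℝ) = Real.exp 0 from Real.exp_zero.symm]
    exact Real.exp_lt_exp.mpr (mul_pos hβ ha0)
  have hA1 : 1 < A := by
    rw [hAdef, show (1:ℝ) = Real.exp 0 from Real.exp_zero.symm]
    exact Real.exp_lt_exp.mpr (mul_pos hβ hb0)
  have hBA : B ≤ A := Real.exp_le_exp.mpr (by nlinarith)
  have key := hg 0 a b le_rfl ha0.le hab hbR
  rw [sub_zero] at key
  have hquot : Real.exp (β * (b - a)) = A / B := by
    rw [show β * (b - a) = β * b - β * a by ring, Real.exp_sub]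
  rw [hquot] at key
  -- polynomial form of key
  have keyP : (B * g a - g 0) * (A - 1) ≤ (B - 1) * (A * g b - g 0) := by
    have h2 := mul_le_mul_of_nonneg_left key (mul_pos hB0 (by linarith : (0:ℝ) < A - 1)).le
    have hBne : B ≠ 0 := hB0.ne'
    have hA1ne : A - 1 ≠ 0 := by linarith
    rw [← hAdef] at h2
    field_simp at h2
    rw [mul_div_cancel_left₀ _ hA1ne] at h2
    nlinarith [h2]
  -- rewrite exp(-β*r) as inverses
  have ea : Real.exp (-β * a) = B⁻¹ := by
    rw [show -β * a = -(β * a) by ring, Real.exp_neg]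
  have eb : Real.exp (-β * b) = A⁻¹ := by
    rw [show -β * b = -(β * b) by ring, Real.exp_neg]
  rw [ea, eb]
  have hBne : B ≠ 0 := hB0.ne'
  have hAne : A ≠ 0 := hA0.ne'
  have h1B : (0:ℝ) < 1 - B⁻¹ := by
    rw [sub_pos, inv_lt_one_iff₀]; right; exact hB1
  have h1A : (0:ℝ) < 1 - A⁻¹ := by
    rw [sub_pos, inv_lt_one_iff₀]; right; exact hA1
  have eL : β * (g a - B⁻¹ * g 0) / (1 - B⁻¹) = β * (B * g a - g 0) / (B - 1) := by
    rw [div_eq_div_iff h1B.ne' (by linarith : (0:ℝ) < B - 1).ne']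
    field_simp
  have eR : β * (g b - A⁻¹ * g 0) / (1 - A⁻¹) = β * (A * g b - g 0) / (A - 1) := by
    rw [div_eq_div_iff h1A.ne' (by linarith : (0:ℝ) < A - 1).ne']
    field_simp
  rw [eL, eR, div_le_div_iff₀ (by linarith) (by linarith)]
  nlinarith [mul_le_mul_of_nonneg_left keyP hβ.le]
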